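/- Let G, H, K and T be finite groups. For a bifree (G,H)-biset X, the assignment [μ] ↦ Σ_{[λ] ∈ Inj(T,G)/G} (|X^{Δ(λ(T), λ∘μ⁻¹, μ(T))}| / |C_G(λ(T))|) · [λ] gives a well-defined ℚ-linear map σ_T(X): ℚ[Inj(T,H)/H] → ℚ[Inj(T,G)/G] (independent of the chosen representatives λ and μ). Moreover, for every bifree (G,H)-biset X and every bifree (H,K)-biset Y one has σ_T(X ×_H Y) = σ_T(X) ∘ σ_T(Y). -/

import Mathlib

open scoped Classical

/-- Injective group homomorphisms `T → G`. -/
def InjHom (T G : Type*) [Group T] [Group G] := {f : T →* G // Function.Injective f}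

/-- The orbit relation for the `G`-action `g • λ = c_g ∘ λ` on `Inj(T,G)`;
its quotient is `Inj(T,G)/G = \overline{Inj}(T,G)`. -/
def injSetoid (T G : Type*) [Group T] [Group G] : Setoid (InjHom T G) where
  r f f' := ∃ g : G, (MulAut.conj g).toMonoidHom.comp f.1 = f'.1
  iseqv := by
    constructor
    · intro f; exact ⟨1, by ext x; simp⟩
    · rintro f f' ⟨g, h⟩
      refine ⟨g⁻¹, ?_⟩; ext x
      have hx : f'.1 x = g * f.1 x * g⁻¹ := by
        rw [← h]; simp [MulAut.conj_apply]
      simp only [MonoidHom.comp_apply, MulEquiv.coe_toMonoidHom, MulAut.conj_apply, hx]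
      group
    · rintro f f' f'' ⟨g, h⟩ ⟨g', h'⟩
      refine ⟨g' * g, ?_⟩; ext x
      have hx : f'.1 x = g * f.1 x * g⁻¹ := by
        rw [← h]; simp [MulAut.conj_apply]
      have hx' : f''.1 x = g' * f'.1 x * g'⁻¹ := by
        rw [← h']; simp [MulAut.conj_apply]
      simp only [MonoidHom.comp_apply, MulEquiv.coe_toMonoidHom, MulAut.conj_apply, hx', hx]
      group
/-- The `H`-orbit relation on `X × Y` whose quotient is the tensor product
`X ×_H Y` of a `(G,H)`-biset `X` and an `(H,K)`-biset `Y`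
(`h • (x,y) = (x h⁻¹, h y)`, i.e. `((1,h) • x, (h,1) • y)`). -/
def tensSetoid (G H K X Y : Type*) [Group G] [Group H] [Group K]
    [MulAction (G × H) X] [MulAction (H × K) Y] : Setoid (X × Y) where
  r a b := ∃ h : H, ((((1 : G), h) : G × H) • a.1, ((h, (1 : K)) : H × K) • a.2) = b
  iseqv := by
    constructor
    · intro a; exact ⟨1, Prod.ext (one_smul _ _) (one_smul _ _)⟩
    · rintro a b ⟨h, rfl⟩
      exact ⟨h⁻¹, by simp [smul_smul]; exact Prod.ext (one_smul _ _) (one_smul _ _)⟩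
    · rintro a b c ⟨h, rfl⟩ ⟨h', rfl⟩
      exact ⟨h' * h, by simp [smul_smul]⟩

/-- The matrix entry of `σ_T(X)` at injective homomorphisms `λ : T → G`,
`μ : T → H`:  `|X^{Δ(λ(T),λμ⁻¹,μ(T))}| / |C_G(λ(T))|`.  (Note
`Δ(λ(T),λμ⁻¹,μ(T)) = {(λ t, μ t) : t ∈ T}`.) -/
noncomputable def entryX {T G H : Type*} [Group T] [Group G] [Group H]
    (X : Type*) [MulAction (G × H) X] (l : InjHom T G) (m : InjHom T H) : ℚ :=
  (Nat.card {x : X | ∀ t : T, ((l.1 t, m.1 t) : G × H) • x = x} : ℚ) /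
    (Nat.card ↥(Subgroup.centralizer ((l.1.range : Subgroup G) : Set G)) : ℚ)

/-- The matrix entry of `σ_T(X ×_H Y)`, with `X ×_H Y` realized as the quotient
of `X × Y` by `tensSetoid` and `(g,k) • [x,y] = [(g,1) • x, (1,k) • y]`. -/
noncomputable def entryXY (T : Type*) {G : Type*} (H : Type*) {K : Type*}
    [Group T] [Group G] [Group H] [Group K]
    (X Y : Type*) [MulAction (G × H) X] [MulAction (H × K) Y]
    (l : InjHom T G) (n : InjHom T K) : ℚ :=
  (Nat.card {q : Quotient (tensSetoid G H K X Y) |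
      ∀ (t : T) (x : X) (y : Y), Quotient.mk (tensSetoid G H K X Y) (x, y) = q →
        Quotient.mk (tensSetoid G H K X Y)
          (((l.1 t, (1 : H)) : G × H) • x, (((1 : H), n.1 t) : H × K) • y) = q} : ℚ) /
    (Nat.card ↥(Subgroup.centralizer ((l.1.range : Subgroup G) : Set G)) : ℚ)


section H1
variable {M α : Type*} [Group M] [MulAction M α]

lemma conj_smul_fix_iff (c s : M) (x : α) :
    (c * s * c⁻¹) • x = x ↔ s • (c⁻¹ • x) = c⁻¹ • x := by
  constructor
  · intro hx
    have h2 := congrArg (fun z => c⁻¹ • z) hx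
    simpa [smul_smul, mul_assoc] using h2
  · intro hx
    have h2 := congrArg (fun z => c • z) hx
    simpa [smul_smul, mul_assoc] using h2

end H1

section H2
variable {T G H : Type*} [Group T] [Group G] [Group H]

lemma card_fix_eq {X : Type*} [MulAction (G × H) X]
    (l l' : T → G) (m m' : T → H) (g : G) (h : H)
    (hl : ∀ t, l' t = g * l t * g⁻¹) (hm : ∀ t, m' t = h * m t * h⁻¹) :
    Nat.card {x : X | ∀ t : T, ((l' t, m' t) : G × H) • x = x}
      = Nat.card {x : X | ∀ t : T, ((l t, m t) : G × H) • x = x} := by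
  apply Nat.card_congr
  refine Equiv.subtypeEquiv (MulAction.toPerm (((g, h) : G × H))⁻¹) fun x => ?_
  have key : ∀ t : T, ((l' t, m' t) : G × H) = ((g,h) : G × H) * (l t, m t) * ((g,h) : G × H)⁻¹ := by
    intro t
    simp [Prod.ext_iff, hl t, hm t, mul_assoc]
  constructor
  · intro hx t
    have := (conj_smul_fix_iff ((g,h) : G × H) ((l t, m t)) x).mp (by rw [← key t]; exact hx t)
    simpa using this
  · intro hx t
    rw [key t]
    exact (conj_smul_fix_iff ((g,h) : G × H) ((l t, m t)) x).mpr (by simpa using hx t)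

lemma card_centralizer_conj (g : G) (s s' : Set G)
    (hs : s' = (fun x => g * x * g⁻¹) '' s) :
    Nat.card ↥(Subgroup.centralizer s') = Nat.card ↥(Subgroup.centralizer s) := by
  subst hs
  apply Nat.card_congr
  have mem1 : ∀ c : G, c ∈ Subgroup.centralizer ((fun x => g * x * g⁻¹) '' s) →
      g⁻¹ * c * g ∈ Subgroup.centralizer s := by
    intro c hc
    rw [Subgroup.mem_centralizer_iff] at hc ⊢
    intro y hy
    have h1 := hc (g * y * g⁻¹) ⟨y, hy, rfl⟩
    have h2 := congrArg (fun z => g⁻¹ * z * g) h1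
    simp only [mul_assoc, inv_mul_cancel_left, inv_mul_cancel, mul_one] at h2 ⊢
    simpa [mul_assoc] using h2
  have mem2 : ∀ c : G, c ∈ Subgroup.centralizer s →
      g * c * g⁻¹ ∈ Subgroup.centralizer ((fun x => g * x * g⁻¹) '' s) := by
    intro c hc
    rw [Subgroup.mem_centralizer_iff] at hc ⊢
    rintro y ⟨z, hz, rfl⟩
    have h1 := hc z hz
    have h2 := congrArg (fun w => g * w * g⁻¹) h1
    simp only [mul_assoc] at h2 ⊢
    simpa [mul_assoc, inv_mul_cancel_left] using h2
  refine ⟨fun c => ⟨g⁻¹ * c.1 * g, mem1 c.1 c.2⟩,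
    fun d => ⟨g * d.1 * g⁻¹, mem2 d.1 d.2⟩, fun c => ?_, fun d => ?_⟩
  · ext; simp [mul_assoc]
  · ext; simp [mul_assoc]

lemma range_conj_eq (l l' : T →* G) (g : G)
    (hl : ∀ t, l' t = g * l t * g⁻¹) :
    ((l'.range : Subgroup G) : Set G) = (fun x => g * x * g⁻¹) '' ((l.range : Subgroup G) : Set G) := by
  ext y
  simp only [SetLike.mem_coe, MonoidHom.mem_range, Set.mem_image]
  constructor
  · rintro ⟨t, rfl⟩
    exact ⟨l t, ⟨t, rfl⟩, (hl t).symm⟩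
  · rintro ⟨z, ⟨t, rfl⟩, rfl⟩
    exact ⟨t, hl t⟩

/-- entryX is constant on orbits. -/
lemma entryX_conj {X : Type*} [MulAction (G × H) X]
    (l l' : InjHom T G) (m m' : InjHom T H)
    (hl : (injSetoid T G).r l l') (hm : (injSetoid T H).r m m') :
    entryX X l m = entryX X l' m' := by
  obtain ⟨g, hg⟩ := hl
  obtain ⟨h, hh⟩ := hm
  have hgl : ∀ t, l'.1 t = g * l.1 t * g⁻¹ := by
    intro t; rw [← hg]; simp [MulAut.conj_apply]
  have hhm : ∀ t, m'.1 t = h * m.1 t * h⁻¹ := by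
    intro t; rw [← hh]; simp [MulAut.conj_apply]
  unfold entryX
  rw [card_fix_eq (l.1) (l'.1) (m.1) (m'.1) g h hgl hhm,
    card_centralizer_conj g _ _ (range_conj_eq l.1 l'.1 g hgl)]

end H2

set_option linter.unusedSectionVars false

section H3
variable {T G H K : Type*} [Group T] [Group G] [Group H] [Group K]
variable (X Y : Type*) [MulAction (G × H) X] [MulAction (H × K) Y]

/-- the shift map `[x,y] ↦ [(g,1)•x,(1,k)•y]` on `X ×_H Y`. -/
def shiftQ (g : G) (k : K) :
    Quotient (tensSetoid G H K X Y) → Quotient (tensSetoid G H K X Y) :=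
  Quotient.map (fun p => (((g, (1:H)) : G × H) • p.1, (((1:H), k) : H × K) • p.2))
    (by
      rintro ⟨x, y⟩ ⟨x', y'⟩ ⟨h, hh⟩
      refine ⟨h, ?_⟩
      obtain ⟨h1, h2⟩ := Prod.mk.injEq .. ▸ hh
      simp only [← h1, ← h2, smul_smul, Prod.mk_mul_mk, one_mul, mul_one])

lemma shiftQ_mk (g : G) (k : K) (x : X) (y : Y) :
    shiftQ X Y g k (Quotient.mk (tensSetoid G H K X Y) (x, y))
      = Quotient.mk (tensSetoid G H K X Y)
          (((g, (1:H)) : G × H) • x, (((1:H), k) : H × K) • y) := rfl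

lemma shiftQ_shiftQ (g g' : G) (k k' : K) (q : Quotient (tensSetoid G H K X Y)) :
    shiftQ X Y g' k' (shiftQ X Y g k q)
      = shiftQ X Y (g' * g) (k' * k) q := by
  induction q using Quotient.ind with
  | _ p =>
    obtain ⟨x, y⟩ := p
    simp only [shiftQ_mk, smul_smul, Prod.mk_mul_mk, one_mul, mul_one]

/-- fixed-point predicate on the quotient, as in `entryXY`. -/
def PredQ (f : T → G) (e : T → K) (q : Quotient (tensSetoid G H K X Y)) : Prop :=
  ∀ (t : T) (x : X) (y : Y), Quotient.mk (tensSetoid G H K X Y) (x, y) = q →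
    Quotient.mk (tensSetoid G H K X Y)
      (((f t, (1 : H)) : G × H) • x, (((1 : H), e t) : H × K) • y) = q

lemma shiftQ_one (q : Quotient (tensSetoid G H K X Y)) :
    shiftQ X Y (1 : G) (1 : K) q = q := by
  induction q using Quotient.ind with
  | _ p => obtain ⟨x, y⟩ := p; rw [shiftQ_mk]; exact congrArg _ (Prod.ext (one_smul _ _) (one_smul _ _))

lemma predQ_shift (f f' : T → G) (e e' : T → K) (g : G) (k : K)
    (hf : ∀ t, f' t = g * f t * g⁻¹) (he : ∀ t, e' t = k * e t * k⁻¹)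
    (q : Quotient (tensSetoid G H K X Y)) (hq : PredQ X Y f e q) :
    PredQ X Y f' e' (shiftQ X Y g k q) := by
  intro t x y hxy
  have h0 : Quotient.mk (tensSetoid G H K X Y)
      (((g⁻¹, (1:H)) : G × H) • x, (((1:H), k⁻¹) : H × K) • y) = q := by
    have h := congrArg (shiftQ X Y g⁻¹ k⁻¹) hxy
    rwa [shiftQ_mk, shiftQ_shiftQ, inv_mul_cancel, inv_mul_cancel, shiftQ_one] at h
  have h1 := hq t _ _ h0
  have h2 := congrArg (shiftQ X Y g k) h1
  rw [shiftQ_mk] at h2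
  have ex : ((f' t, (1:H)) : G × H) • x
      = ((g, (1:H)) : G × H) • ((f t, (1:H)) : G × H) • ((g⁻¹, (1:H)) : G × H) • x := by
    simp [smul_smul, Prod.mk_mul_mk, hf t, mul_assoc]
  have ey : (((1:H), e' t) : H × K) • y
      = (((1:H), k) : H × K) • (((1:H), e t) : H × K) • (((1:H), k⁻¹) : H × K) • y := by
    simp [smul_smul, Prod.mk_mul_mk, he t, mul_assoc]
  rw [ex, ey]
  exact h2

lemma card_predQ_conj (f f' : T → G) (e e' : T → K) (g : G) (k : K)
    (hf : ∀ t, f' t = g * f t * g⁻¹) (he : ∀ t, e' t = k * e t * k⁻¹) :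
    Nat.card {q : Quotient (tensSetoid G H K X Y) // PredQ X Y f' e' q}
      = Nat.card {q : Quotient (tensSetoid G H K X Y) // PredQ X Y f e q} := by
  have hf' : ∀ t, f t = g⁻¹ * f' t * g⁻¹⁻¹ := by
    intro t; rw [hf t]; simp [mul_assoc]
  have he' : ∀ t, e t = k⁻¹ * e' t * k⁻¹⁻¹ := by
    intro t; rw [he t]; simp [mul_assoc]
  have inv1 : ∀ q : Quotient (tensSetoid G H K X Y), shiftQ X Y g k (shiftQ X Y g⁻¹ k⁻¹ q) = q := by
    intro q; rw [shiftQ_shiftQ]; simp only [mul_inv_cancel]; exact shiftQ_one X Y q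
  have inv2 : ∀ q : Quotient (tensSetoid G H K X Y), shiftQ X Y g⁻¹ k⁻¹ (shiftQ X Y g k q) = q := by
    intro q; rw [shiftQ_shiftQ]; simp only [inv_mul_cancel]; exact shiftQ_one X Y q
  apply Nat.card_congr
  refine ⟨fun q => ⟨shiftQ X Y g⁻¹ k⁻¹ q.1, predQ_shift X Y f' f e' e g⁻¹ k⁻¹ hf' he' q.1 q.2⟩,
    fun q => ⟨shiftQ X Y g k q.1, predQ_shift X Y f f' e e' g k hf he q.1 q.2⟩,
    fun q => ?_, fun q => ?_⟩
  · exact Subtype.ext (inv1 q.1)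
  · exact Subtype.ext (inv2 q.1)

/-- entryXY is constant on orbits. -/
lemma entryXY_conj (l l' : InjHom T G) (n n' : InjHom T K)
    (hl : (injSetoid T G).r l l') (hn : (injSetoid T K).r n n') :
    entryXY T H X Y l n = entryXY T H X Y l' n' := by
  obtain ⟨g, hg⟩ := hl
  obtain ⟨k, hk⟩ := hn
  have hgl : ∀ t, l'.1 t = g * l.1 t * g⁻¹ := by
    intro t; rw [← hg]; simp [MulAut.conj_apply]
  have hkn : ∀ t, n'.1 t = k * n.1 t * k⁻¹ := by
    intro t; rw [← hk]; simp [MulAut.conj_apply]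
  unfold entryXY
  have hnum : Nat.card {q : Quotient (tensSetoid G H K X Y) |
      ∀ (t : T) (x : X) (y : Y), Quotient.mk (tensSetoid G H K X Y) (x, y) = q →
        Quotient.mk (tensSetoid G H K X Y)
          (((l'.1 t, (1 : H)) : G × H) • x, (((1 : H), n'.1 t) : H × K) • y) = q}
      = Nat.card {q : Quotient (tensSetoid G H K X Y) |
      ∀ (t : T) (x : X) (y : Y), Quotient.mk (tensSetoid G H K X Y) (x, y) = q →
        Quotient.mk (tensSetoid G H K X Y)
          (((l.1 t, (1 : H)) : G × H) • x, (((1 : H), n.1 t) : H × K) • y) = q} :=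
    card_predQ_conj X Y (fun t => l.1 t) (fun t => l'.1 t)
      (fun t => n.1 t) (fun t => n'.1 t) g k hgl hkn
  rw [hnum, card_centralizer_conj g _ _ (range_conj_eq l.1 l'.1 g hgl)]

end H3

section H4
variable {T G H K : Type*} [Group T] [Group G] [Group H] [Group K]

instance instFiniteMonoidHom [Finite T] [Finite G] : Finite (T →* G) :=
  Finite.of_injective (fun f => (f : T → G)) DFunLike.coe_injective

instance instFiniteInjHom [Finite T] [Finite G] : Finite (InjHom T G) :=
  inferInstanceAs (Finite {f : T →* G // Function.Injective f})

instance instMulActionInjHom : MulAction G (InjHom T G) where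
  smul g f := ⟨(MulAut.conj g).toMonoidHom.comp f.1,
    fun a b hab => f.2 ((MulAut.conj g).injective hab)⟩
  one_smul f := by
    apply Subtype.ext; ext t
    show (MulAut.conj (1 : G)) (f.1 t) = f.1 t
    simp
  mul_smul g g' f := by
    apply Subtype.ext; ext t
    show (MulAut.conj (g * g')) (f.1 t) = (MulAut.conj g) ((MulAut.conj g') (f.1 t))
    simp [MulAut.conj_apply, mul_assoc, mul_inv_rev]

lemma injHom_smul_def (g : G) (f : InjHom T G) :
    (g • f).1 = (MulAut.conj g).toMonoidHom.comp f.1 := rfl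

lemma mk_eq_iff_mem_orbit (j : Quotient (injSetoid T H)) (μ : InjHom T H) :
    Quotient.mk (injSetoid T H) μ = j ↔ μ ∈ MulAction.orbit H j.out := by
  rw [MulAction.mem_orbit_iff]
  constructor
  · intro hq
    have hr : (injSetoid T H).r μ j.out := Quotient.exact (hq.trans j.out_eq.symm)
    obtain ⟨g, hg⟩ := hr
    refine ⟨g⁻¹, ?_⟩
    apply Subtype.ext
    rw [injHom_smul_def, ← hg]
    ext t
    simp [MulAut.conj_apply, mul_assoc]
  · rintro ⟨h, rfl⟩
    conv_rhs => rw [← Quotient.out_eq j]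
    apply Quotient.sound
    refine ⟨h⁻¹, ?_⟩
    rw [injHom_smul_def]
    ext t
    simp [MulAut.conj_apply, mul_assoc]

lemma mem_stab_iff_centralizer (f : InjHom T H) (h : H) :
    h ∈ MulAction.stabilizer H f ↔
      h ∈ Subgroup.centralizer ((f.1.range : Subgroup H) : Set H) := by
  rw [MulAction.mem_stabilizer_iff, Subgroup.mem_centralizer_iff]
  constructor
  · intro hs y hy
    obtain ⟨t, rfl⟩ : ∃ t, f.1 t = y := by
      simpa [MonoidHom.mem_range] using hy
    have h1 : (h • f).1 t = f.1 t := by rw [hs]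
    rw [injHom_smul_def] at h1
    simp only [MonoidHom.comp_apply, MulEquiv.coe_toMonoidHom, MulAut.conj_apply] at h1
    have h2 := congrArg (· * h) h1
    exact (by simpa [mul_assoc] using h2 : h * f.1 t = f.1 t * h).symm
  · intro hc
    apply Subtype.ext
    rw [injHom_smul_def]
    ext t
    simp only [MonoidHom.comp_apply, MulEquiv.coe_toMonoidHom, MulAut.conj_apply]
    have h1 := hc (f.1 t) (by simp [MonoidHom.mem_range])
    have h2 := congrArg (· * h⁻¹) h1.symm
    simpa [mul_assoc] using h2

lemma card_fiber_mul_card_centralizer [Finite T] [Finite H]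
    (j : Quotient (injSetoid T H)) :
    Nat.card {μ : InjHom T H // Quotient.mk (injSetoid T H) μ = j} *
      Nat.card ↥(Subgroup.centralizer ((j.out.1.range : Subgroup H) : Set H))
      = Nat.card H := by
  have e5 : {μ : InjHom T H // Quotient.mk (injSetoid T H) μ = j}
      ≃ MulAction.orbit H j.out :=
    Equiv.subtypeEquivRight (mk_eq_iff_mem_orbit j)
  have e6 : ↥(MulAction.stabilizer H j.out)
      ≃ ↥(Subgroup.centralizer ((j.out.1.range : Subgroup H) : Set H)) :=
    Equiv.subtypeEquivRight (mem_stab_iff_centralizer j.out)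
  rw [Nat.card_congr e5, ← Nat.card_congr e6, ← Nat.card_prod]
  exact Nat.card_congr (MulAction.orbitProdStabilizerEquivGroup H j.out)

end H4

section H5
variable {T : Type*} (G H K : Type*) [Group T] [Group G] [Group H] [Group K]
variable (X Y : Type*) [MulAction (G × H) X] [MulAction (H × K) Y]

/-- the right-`H`-action on pairs. -/
def actH (h : H) (p : X × Y) : X × Y :=
  ((((1 : G), h) : G × H) • p.1, ((h, (1 : K)) : H × K) • p.2)

/-- the `Δ`-shift on pairs. -/
def shP (f : T → G) (e : T → K) (t : T) (p : X × Y) : X × Y :=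
  (((f t, (1 : H)) : G × H) • p.1, (((1 : H), e t) : H × K) • p.2)

/-- membership in the set of pairs whose class is `Δ`-fixed. -/
abbrev PPmem (f : T → G) (e : T → K) (p : X × Y) : Prop :=
  ∀ t : T, Quotient.mk (tensSetoid G H K X Y) (shP G H K X Y f e t p)
      = Quotient.mk (tensSetoid G H K X Y) p

lemma mk_actH (h : H) (p : X × Y) :
    Quotient.mk (tensSetoid G H K X Y) (actH G H K X Y h p)
      = Quotient.mk (tensSetoid G H K X Y) p := by
  apply Eq.symm
  apply Quotient.sound
  exact ⟨h, rfl⟩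

lemma actH_actH (h h' : H) (p : X × Y) :
    actH G H K X Y h' (actH G H K X Y h p) = actH G H K X Y (h' * h) p := by
  simp [actH, smul_smul, Prod.mk_mul_mk, one_mul, mul_one]

lemma actH_one (p : X × Y) : actH G H K X Y 1 p = p := by simp [actH]; exact Prod.ext (one_smul _ _) (one_smul _ _)

lemma shP_actH (f : T → G) (e : T → K) (t : T) (h : H) (p : X × Y) :
    shP G H K X Y f e t (actH G H K X Y h p)
      = actH G H K X Y h (shP G H K X Y f e t p) := by
  simp [shP, actH, smul_smul, Prod.mk_mul_mk, one_mul, mul_one]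

lemma mem_PP_predQ (f : T → G) (e : T → K) (p : X × Y) (hp : PPmem G H K X Y f e p) :
    PredQ X Y f e (Quotient.mk (tensSetoid G H K X Y) p) := by
  intro t x y hxy
  obtain ⟨h, hh⟩ := Quotient.exact hxy
  have hh' : actH G H K X Y h (x, y) = p := hh
  show Quotient.mk (tensSetoid G H K X Y) (shP G H K X Y f e t (x, y))
      = Quotient.mk (tensSetoid G H K X Y) p
  calc Quotient.mk (tensSetoid G H K X Y) (shP G H K X Y f e t (x, y))
      = Quotient.mk (tensSetoid G H K X Y) (actH G H K X Y h (shP G H K X Y f e t (x, y))) :=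
        (mk_actH G H K X Y h _).symm
    _ = Quotient.mk (tensSetoid G H K X Y) (shP G H K X Y f e t (actH G H K X Y h (x, y))) := by
        rw [shP_actH]
    _ = Quotient.mk (tensSetoid G H K X Y) (shP G H K X Y f e t p) := by rw [hh']
    _ = Quotient.mk (tensSetoid G H K X Y) p := hp t

lemma card_PP_eq_card_fix_mul
    (hX2 : ∀ (x : X) (h : H), (((1 : G), h) : G × H) • x = x → h = 1)
    (f : T → G) (e : T → K) :
    Nat.card {p : X × Y // PPmem G H K X Y f e p}
      = Nat.card {q : Quotient (tensSetoid G H K X Y) // PredQ X Y f e q}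
          * Nat.card H := by
  classical
  have hchoice : ∀ p : X × Y,
      ∃ h : H, actH G H K X Y h ((Quotient.mk (tensSetoid G H K X Y) p).out) = p := by
    intro p
    obtain ⟨h, hh⟩ := Quotient.exact ((Quotient.mk (tensSetoid G H K X Y) p).out_eq)
    exact ⟨h, hh⟩
  have memPP : ∀ (q : Quotient (tensSetoid G H K X Y)), PredQ X Y f e q →
      ∀ h : H, PPmem G H K X Y f e (actH G H K X Y h q.out) := by
    intro q hq h t
    rw [shP_actH, mk_actH, mk_actH, Quotient.out_eq]
    exact hq t q.out.1 q.out.2 (by rw [Quotient.out_eq])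
  have hfree : ∀ (h : H) (p : X × Y), actH G H K X Y h p = p → h = 1 := by
    intro h p hp
    exact hX2 p.1 h (congrArg Prod.fst hp)
  have main : {p : X × Y // PPmem G H K X Y f e p}
      ≃ {q : Quotient (tensSetoid G H K X Y) // PredQ X Y f e q} × H := by
    refine ⟨fun p => (⟨Quotient.mk (tensSetoid G H K X Y) p.1,
        mem_PP_predQ G H K X Y f e p.1 p.2⟩, Classical.choose (hchoice p.1)),
      fun qh => ⟨actH G H K X Y qh.2 qh.1.1.out, memPP qh.1.1 qh.1.2 qh.2⟩,
      fun p => ?_, fun qh => ?_⟩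
    · exact Subtype.ext (Classical.choose_spec (hchoice p.1))
    · obtain ⟨⟨q, hq⟩, h⟩ := qh
      have e0 : Quotient.mk (tensSetoid G H K X Y) (actH G H K X Y h q.out) = q :=
        (mk_actH G H K X Y h q.out).trans (Quotient.out_eq q)
      have h'h : Classical.choose (hchoice (actH G H K X Y h q.out)) = h := by
        generalize hcc : Classical.choose (hchoice (actH G H K X Y h q.out)) = h'
        have spec := Classical.choose_spec (hchoice (actH G H K X Y h q.out))
        rw [hcc] at spec
        have e1 := congrArg Quotient.out e0
        rw [e1] at spec
        have hfix : actH G H K X Y (h⁻¹ * h') q.out = q.out := by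
          rw [← actH_actH, spec, actH_actH, inv_mul_cancel, actH_one]
        exact (inv_mul_eq_one.mp (hfree _ _ hfix)).symm
      refine Prod.ext (Subtype.ext e0) h'h
  rw [Nat.card_congr main, Nat.card_prod]

lemma card_PP_eq_sum [Finite T] [Finite H] [Finite X] [Finite Y]
    [Fintype (InjHom T H)]
    (l : InjHom T G) (n : InjHom T K)
    (hX2 : ∀ (x : X) (h : H), (((1 : G), h) : G × H) • x = x → h = 1)
    (hY2 : ∀ (y : Y) (k : K), (((1 : H), k) : H × K) • y = y → k = 1) :
    Nat.card {p : X × Y // PPmem G H K X Y (fun t => l.1 t) (fun t => n.1 t) p}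
      = ∑ μ : InjHom T H,
          Nat.card {x : X | ∀ t : T, ((l.1 t, μ.1 t) : G × H) • x = x}
            * Nat.card {y : Y | ∀ t : T, ((μ.1 t, n.1 t) : H × K) • y = y} := by
  classical
  have huniq : ∀ (x : X) (gg : G) (h h' : H),
      ((gg, h) : G × H) • x = x → ((gg, h') : G × H) • x = x → h = h' := by
    intro x gg h h' e1 e2
    have k1 : (((gg, h') : G × H))⁻¹ • x = x := inv_smul_eq_iff.mpr e2.symm
    have k2 : ((((gg, h') : G × H))⁻¹ * ((gg, h) : G × H)) • x = x := by
      rw [mul_smul, e1, k1]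
    have k3 : ((((gg, h') : G × H))⁻¹ * ((gg, h) : G × H))
        = (((1 : G), h'⁻¹ * h) : G × H) := by
      simp [Prod.ext_iff]
    rw [k3] at k2
    exact (inv_mul_eq_one.mp (hX2 x (h'⁻¹ * h) k2)).symm
  have hex : ∀ p : X × Y, PPmem G H K X Y (fun t => l.1 t) (fun t => n.1 t) p → ∀ t : T,
      ∃ h : H, ((l.1 t, h) : G × H) • p.1 = p.1 ∧ ((h, n.1 t) : H × K) • p.2 = p.2 := by
    intro p hp t
    obtain ⟨h, hh⟩ := Quotient.exact (hp t)
    refine ⟨h, ?_, ?_⟩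
    · have h1 := congrArg Prod.fst hh
      simpa [shP, smul_smul, Prod.mk_mul_mk] using h1
    · have h1 := congrArg Prod.snd hh
      simpa [shP, smul_smul, Prod.mk_mul_mk] using h1
  have mudef : ∀ p : X × Y, PPmem G H K X Y (fun t => l.1 t) (fun t => n.1 t) p →
      ∃ μ : InjHom T H, (∀ t : T, ((l.1 t, μ.1 t) : G × H) • p.1 = p.1)
        ∧ (∀ t : T, ((μ.1 t, n.1 t) : H × K) • p.2 = p.2) := by
    intro p hp
    choose F hF1 hF2 using hex p hp
    have Fhom : ∀ s t : T, F (s * t) = F s * F t := by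
      intro s t
      have fix : ((l.1 (s * t), F s * F t) : G × H) • p.1 = p.1 := by
        rw [map_mul]
        have hprod : ((l.1 s * l.1 t, F s * F t) : G × H)
            = ((l.1 s, F s) : G × H) * ((l.1 t, F t) : G × H) := rfl
        rw [hprod, mul_smul, hF1 t, hF1 s]
      exact huniq p.1 (l.1 (s * t)) _ _ (hF1 (s * t)) fix
    have inj : Function.Injective (MonoidHom.mk' F Fhom) := by
      rw [injective_iff_map_eq_one]
      intro t ht
      have h2 := hF2 t
      have h3 : F t = 1 := ht
      rw [h3] at h2
      exact (injective_iff_map_eq_one n.1).mp n.2 t (hY2 p.2 (n.1 t) h2)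
    exact ⟨⟨MonoidHom.mk' F Fhom, inj⟩, hF1, hF2⟩
  choose mu hmu1 hmu2 using mudef
  have E : {p : X × Y // PPmem G H K X Y (fun t => l.1 t) (fun t => n.1 t) p}
      ≃ {pm : InjHom T H × (X × Y) //
          (∀ t : T, ((l.1 t, pm.1.1 t) : G × H) • pm.2.1 = pm.2.1)
            ∧ (∀ t : T, ((pm.1.1 t, n.1 t) : H × K) • pm.2.2 = pm.2.2)} := by
    refine ⟨fun p => ⟨(mu p.1 p.2, p.1), hmu1 p.1 p.2, hmu2 p.1 p.2⟩,
      fun pm => ⟨pm.1.2, ?_⟩, fun p => ?_, fun pm => ?_⟩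
    · intro t
      apply Quotient.sound
      refine ⟨pm.1.1.1 t, Prod.ext ?_ ?_⟩
      · show (((1 : G), pm.1.1.1 t) : G × H)
            • (shP G H K X Y (fun t => l.1 t) (fun t => n.1 t) t pm.1.2).1 = pm.1.2.1
        simp only [shP, smul_smul, Prod.mk_mul_mk, one_mul, mul_one]
        exact pm.2.1 t
      · show ((pm.1.1.1 t, (1 : K)) : H × K)
            • (shP G H K X Y (fun t => l.1 t) (fun t => n.1 t) t pm.1.2).2 = pm.1.2.2
        simp only [shP, smul_smul, Prod.mk_mul_mk, one_mul, mul_one]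
        exact pm.2.2 t
    · exact Subtype.ext rfl
    · obtain ⟨⟨μ, p⟩, hc1, hc2⟩ := pm
      apply Subtype.ext
      have hmem : PPmem G H K X Y (fun t => l.1 t) (fun t => n.1 t) p := by
        intro t
        apply Quotient.sound
        refine ⟨μ.1 t, Prod.ext ?_ ?_⟩
        · show (((1 : G), μ.1 t) : G × H)
              • (shP G H K X Y (fun t => l.1 t) (fun t => n.1 t) t p).1 = p.1
          simp only [shP, smul_smul, Prod.mk_mul_mk, one_mul, mul_one]
          exact hc1 t
        · show ((μ.1 t, (1 : K)) : H × K)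
              • (shP G H K X Y (fun t => l.1 t) (fun t => n.1 t) t p).2 = p.2
          simp only [shP, smul_smul, Prod.mk_mul_mk, one_mul, mul_one]
          exact hc2 t
      show ((mu p hmem, p) : InjHom T H × (X × Y)) = (μ, p)
      have hμ : mu p hmem = μ := by
        apply Subtype.ext
        apply MonoidHom.ext
        intro t
        exact huniq p.1 (l.1 t) _ _ (hmu1 p hmem t) (hc1 t)
      rw [hμ]
  have E2 := E.trans (Equiv.subtypeProdEquivSigmaSubtype
    (fun (μ : InjHom T H) (p : X × Y) =>
      (∀ t : T, ((l.1 t, μ.1 t) : G × H) • p.1 = p.1)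
        ∧ (∀ t : T, ((μ.1 t, n.1 t) : H × K) • p.2 = p.2)))
  letI : ∀ μ : InjHom T H, Fintype {p : X × Y //
      (∀ t : T, ((l.1 t, μ.1 t) : G × H) • p.1 = p.1)
        ∧ (∀ t : T, ((μ.1 t, n.1 t) : H × K) • p.2 = p.2)} := fun μ => Fintype.ofFinite _
  rw [Nat.card_congr E2, Nat.card_eq_fintype_card, Fintype.card_sigma]
  refine Finset.sum_congr rfl fun μ _ => ?_
  rw [← Nat.card_eq_fintype_card,
    Nat.card_congr (Equiv.subtypeProdEquivProd
      (p := fun x : X => ∀ t : T, ((l.1 t, μ.1 t) : G × H) • x = x)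
      (q := fun y : Y => ∀ t : T, ((μ.1 t, n.1 t) : H × K) • y = y)),
    Nat.card_prod]
  rfl

end H5

section H6
variable {T G H K : Type*} [Group T] [Group G] [Group H] [Group K]
variable [Finite T] [Finite G] [Finite H] [Finite K]

lemma entryXY_key (X Y : Type*) [Finite X] [Finite Y]
    [MulAction (G × H) X] [MulAction (H × K) Y]
    [Fintype (InjHom T H)] [Fintype (Quotient (injSetoid T H))]
    (hX2 : ∀ (x : X) (h : H), (((1 : G), h) : G × H) • x = x → h = 1)
    (hY2 : ∀ (y : Y) (k : K), (((1 : H), k) : H × K) • y = y → k = 1)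
    (l : InjHom T G) (n : InjHom T K) :
    entryXY T H X Y l n
      = ∑ j : Quotient (injSetoid T H), entryX X l j.out * entryX Y j.out n := by
  classical
  set A : InjHom T H → ℕ :=
    fun μ => Nat.card {x : X | ∀ t : T, ((l.1 t, μ.1 t) : G × H) • x = x} with hA
  set B : InjHom T H → ℕ :=
    fun μ => Nat.card {y : Y | ∀ t : T, ((μ.1 t, n.1 t) : H × K) • y = y} with hB
  set fib : Quotient (injSetoid T H) → ℕ :=
    fun j => Nat.card {μ : InjHom T H // Quotient.mk (injSetoid T H) μ = j} with hfibdef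
  set cH : Quotient (injSetoid T H) → ℕ :=
    fun j => Nat.card ↥(Subgroup.centralizer ((j.out.1.range : Subgroup H) : Set H)) with hcHdef
  set cG : ℕ := Nat.card ↥(Subgroup.centralizer ((l.1.range : Subgroup G) : Set G)) with hcGdef
  set nH : ℕ := Nat.card H with hnHdef
  set NQ : ℕ := Nat.card {q : Quotient (tensSetoid G H K X Y) //
      PredQ X Y (fun t => l.1 t) (fun t => n.1 t) q} with hNQdef
  -- F1
  have F1 : NQ * nH = ∑ μ : InjHom T H, A μ * B μ := by
    rw [← card_PP_eq_card_fix_mul G H K X Y hX2 (fun t => l.1 t) (fun t => n.1 t)]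
    exact card_PP_eq_sum G H K X Y l n hX2 hY2
  -- F2
  have F2 : ∀ j, fib j * cH j = nH := fun j => card_fiber_mul_card_centralizer j
  -- F3
  have F3 : ∀ (μ : InjHom T H) (j : Quotient (injSetoid T H)),
      Quotient.mk (injSetoid T H) μ = j → A μ = A j.out ∧ B μ = B j.out := by
    intro μ j hj
    obtain ⟨h, hh⟩ := (mk_eq_iff_mem_orbit j μ).mp hj
    have hμ : ∀ t, μ.1 t = h * j.out.1 t * h⁻¹ := by
      intro t
      rw [← hh, injHom_smul_def]
      simp [MulAut.conj_apply]
    constructor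
    · exact card_fix_eq (fun t => l.1 t) (fun t => l.1 t) (fun t => j.out.1 t)
        (fun t => μ.1 t) 1 h (by simp) hμ
    · exact card_fix_eq (fun t => j.out.1 t) (fun t => μ.1 t) (fun t => n.1 t)
        (fun t => n.1 t) h 1 hμ (by simp)
  -- F4
  have F4 : (∑ μ : InjHom T H, (A μ * B μ : ℚ))
      = ∑ j : Quotient (injSetoid T H), (fib j : ℚ) * (A j.out * B j.out) := by
    rw [← Fintype.sum_fiberwise (fun μ : InjHom T H => Quotient.mk (injSetoid T H) μ)
      (fun μ : InjHom T H => (A μ * B μ : ℚ))]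
    refine Finset.sum_congr rfl fun j _ => ?_
    have hconst : ∀ μ : {μ : InjHom T H // Quotient.mk (injSetoid T H) μ = j},
        ((A μ.1 : ℚ) * B μ.1) = (A j.out : ℚ) * B j.out := by
      intro μ
      obtain ⟨hA', hB'⟩ := F3 μ.1 j μ.2
      rw [hA', hB']
    rw [Finset.sum_congr rfl fun μ _ => hconst μ, Finset.sum_const, Finset.card_univ]
    rw [nsmul_eq_mul]
    congr 1
    rw [hfibdef]
    exact_mod_cast (Nat.card_eq_fintype_card (α := {μ : InjHom T H //
      Quotient.mk (injSetoid T H) μ = j})).symm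
  -- nonvanishing
  have hnH0 : (nH : ℚ) ≠ 0 := Nat.cast_ne_zero.mpr Nat.card_pos.ne'
  have hcG0 : (cG : ℚ) ≠ 0 := Nat.cast_ne_zero.mpr Nat.card_pos.ne'
  have hcH0 : ∀ j, (cH j : ℚ) ≠ 0 := fun j => Nat.cast_ne_zero.mpr Nat.card_pos.ne'
  -- assemble
  have hentry : entryXY T H X Y l n = (NQ : ℚ) / cG := rfl
  rw [hentry]
  have hNQval : (NQ : ℚ) = (∑ j : Quotient (injSetoid T H),
      (fib j : ℚ) * (A j.out * B j.out)) / nH := by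
    rw [← F4]
    rw [eq_div_iff hnH0]
    exact_mod_cast F1
  rw [hNQval, div_div, Finset.sum_div]
  refine Finset.sum_congr rfl fun j _ => ?_
  have hex : entryX X l j.out = (A j.out : ℚ) / cG := rfl
  have hey : entryX Y j.out n = (B j.out : ℚ) / cH j := rfl
  rw [hex, hey, div_mul_div_comm]
  have hfib : (fib j : ℚ) * cH j = nH := by exact_mod_cast F2 j
  rw [div_eq_div_iff (mul_ne_zero hnH0 hcG0) (mul_ne_zero hcG0 (hcH0 j))]
  ring_nf
  linear_combination ((A j.out : ℚ) * B j.out * cG) * hfib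

end H6

/-- for bifree bisets `X` (a `(G,H)`-biset) and `Y`
(an `(H,K)`-biset), the entries of `σ_T` are constant on orbits of injective
homomorphisms (so `σ_T(X)`, `σ_T(Y)` and `σ_T(X ×_H Y)` are well defined as
linear maps `ℚ[Inj(T,·)/·] → ℚ[Inj(T,·)/·]`), and
`σ_T(X ×_H Y) = σ_T(X) ∘ σ_T(Y)`. -/
theorem stmt12 {T G H K : Type*} [Group T] [Group G] [Group H] [Group K]
    [Finite T] [Finite G] [Finite H] [Finite K]
    (X Y : Type*) [Finite X] [Finite Y] [MulAction (G × H) X] [MulAction (H × K) Y]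
    (hX1 : ∀ (x : X) (g : G), ((g, (1 : H)) : G × H) • x = x → g = 1)
    (hX2 : ∀ (x : X) (h : H), (((1 : G), h) : G × H) • x = x → h = 1)
    (hY1 : ∀ (y : Y) (h : H), ((h, (1 : K)) : H × K) • y = y → h = 1)
    (hY2 : ∀ (y : Y) (k : K), (((1 : H), k) : H × K) • y = y → k = 1) :
    -- σ_T(X) is well defined on orbit classes
    (∀ (l l' : InjHom T G) (m m' : InjHom T H),
      (injSetoid T G).r l l' → (injSetoid T H).r m m' →
        entryX X l m = entryX X l' m') ∧
    -- σ_T(Y) is well defined on orbit classes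
    (∀ (m m' : InjHom T H) (n n' : InjHom T K),
      (injSetoid T H).r m m' → (injSetoid T K).r n n' →
        entryX Y m n = entryX Y m' n') ∧
    -- σ_T(X ×_H Y) is well defined on orbit classes
    (∀ (l l' : InjHom T G) (n n' : InjHom T K),
      (injSetoid T G).r l l' → (injSetoid T K).r n n' →
        entryXY T H X Y l n = entryXY T H X Y l' n') ∧
    -- σ_T(X ×_H Y) = σ_T(X) ∘ σ_T(Y)
    (∀ (c : Quotient (injSetoid T K) → ℚ) (i : Quotient (injSetoid T G)),
      ∑ᶠ k : Quotient (injSetoid T K), entryXY T H X Y i.out k.out * c k =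
      ∑ᶠ j : Quotient (injSetoid T H),
        entryX X i.out j.out *
          ∑ᶠ k : Quotient (injSetoid T K), entryX Y j.out k.out * c k) := by

  refine ⟨fun l l' m m' hl hm => entryX_conj l l' m m' hl hm,
    fun m m' n n' hm hn => entryX_conj m m' n n' hm hn,
    fun l l' n n' hl hn => entryXY_conj X Y l l' n n' hl hn, ?_⟩
  intro c i
  letI : Fintype (InjHom T H) := Fintype.ofFinite _
  letI : Fintype (Quotient (injSetoid T H)) := Fintype.ofFinite _
  letI : Fintype (Quotient (injSetoid T K)) := Fintype.ofFinite _
  simp only [finsum_eq_sum_of_fintype]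
  rw [Finset.sum_congr rfl fun k _ => by
    rw [entryXY_key X Y hX2 hY2 i.out (Quotient.out k)]]
  simp only [Finset.sum_mul]
  rw [Finset.sum_comm]
  simp only [Finset.mul_sum, mul_assoc]
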